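/- Let a < 0, λ > 0, α > 0 and γ > 1, and define σ'(x) = −a γ x^{γ−1} − λ e^{α x} ∫ₓ^∞ e^{−α y} γ y^{γ−1} dy for x ≥ 0. Then σ'(0) < 0 and σ'(x) → +∞ as x → ∞. -/

import Mathlib

open MeasureTheory

open Set Filter in
private lemma aux_exp_int (b c : ℝ) (hb : 0 < b) :
    (∫ y in Ioi c, Real.exp (-(b*y))) = Real.exp (-(b*c)) / b := by
  have h := integral_comp_mul_left_Ioi (fun x => Real.exp (-x)) c hb
  simp only [smul_eq_mul] at h
  rw [h, integral_exp_neg_Ioi]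
  field_simp

open Set in
private lemma aux_integrable {alpha gam : ℝ} (halpha : 0 < alpha) (hgam : 1 < gam)
    {x : ℝ} (hx : 0 ≤ x) :
    IntegrableOn (fun y => Real.exp (-alpha * y) * (gam * y ^ (gam - 1))) (Ioi x) := by
  have h := integrableOn_rpow_mul_exp_neg_mul_rpow (p := 1) (s := gam - 1) (b := alpha)
    (by linarith) one_pos halpha
  have h2 : IntegrableOn (fun y => Real.exp (-alpha * y) * (gam * y ^ (gam - 1))) (Ioi 0) := by
    refine IntegrableOn.congr_fun (h.const_mul gam) (fun y hy => ?_) measurableSet_Ioi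
    rw [Real.rpow_one]; ring
  exact h2.mono_set (Ioi_subset_Ioi hx)

theorem sigma_density_neg_at_zero_tendsto_atTop
    (a lam alpha gam : ℝ)
    (ha : a < 0) (hlam : 0 < lam) (halpha : 0 < alpha) (hgam : 1 < gam)
    (hsub : lam / (-a * alpha) < 1)
    (s : ℝ → ℝ)
    (hs : ∀ x : ℝ, 0 ≤ x →
      s x = -a * gam * x ^ (gam - 1) -
        lam * Real.exp (alpha * x) *
          ∫ y in Set.Ioi x, Real.exp (-alpha * y) * (gam * y ^ (gam - 1))) :
    s 0 < 0 ∧ Filter.Tendsto s Filter.atTop Filter.atTop := by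
  open Set Filter in
  have hna : 0 < -a := neg_pos.2 ha
  -- Part 1
  have hI0 : 0 < ∫ y in Ioi (0:ℝ), Real.exp (-alpha * y) * (gam * y ^ (gam - 1)) := by
    refine (setIntegral_pos_iff_support_of_nonneg_ae ?_ (aux_integrable halpha hgam le_rfl)).2 ?_
    · filter_upwards [ae_restrict_mem measurableSet_Ioi] with y hy
      have hy0 : 0 < y := hy
      positivity
    · have hsub2 : Ioi (0:ℝ) ⊆
          Function.support (fun y => Real.exp (-alpha * y) * (gam * y ^ (gam - 1))) ∩ Ioi 0 := by
        intro y hy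
        have hy0 : 0 < y := hy
        refine ⟨?_, hy⟩
        simp only [Function.mem_support]
        positivity
      calc (0:ENNReal) < volume (Ioi (0:ℝ)) := by simp [Real.volume_Ioi]
        _ ≤ _ := measure_mono hsub2
  have h0 : s 0 < 0 := by
    rw [hs 0 le_rfl, Real.zero_rpow (by linarith : gam - 1 ≠ 0)]
    simp only [mul_zero, zero_sub, mul_zero, Real.exp_zero, mul_one]
    have : 0 < lam * ∫ y in Ioi (0:ℝ), Real.exp (-alpha * y) * (gam * y ^ (gam - 1)) :=
      mul_pos hlam hI0
    nlinarith [Real.exp_zero]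
  refine ⟨h0, ?_⟩
  -- Part 2
  set β : ℝ := (lam / (-a) + alpha) / 2 with hβdef
  have hlt : lam / (-a) < alpha := by
    rw [div_lt_iff₀ hna]
    have h1 := (div_lt_one (by positivity : 0 < -a * alpha)).1 hsub
    nlinarith
  have hβpos : 0 < β := by
    have : 0 < lam / (-a) := by positivity
    rw [hβdef]; linarith
  have hβlt : β < alpha := by rw [hβdef]; linarith
  have hlamβ : lam / β < -a := by
    rw [div_lt_iff₀ hβpos]
    have h1 : lam / (-a) < β := by rw [hβdef]; linarith
    rw [div_lt_iff₀ hna] at h1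
    linarith
  set δ : ℝ := -a - lam / β with hδdef
  have hδpos : 0 < δ := by rw [hδdef]; linarith
  set x₀ : ℝ := max ((gam - 1) / (alpha - β)) 1 with hx₀def
  have key : ∀ x, x₀ ≤ x → gam * δ * x ^ (gam - 1) ≤ s x := by
    intro x hx
    have hx1 : (1:ℝ) ≤ x := le_trans (le_max_right _ _) hx
    have hx0 : 0 < x := by linarith
    have hcx : gam - 1 ≤ (alpha - β) * x := by
      have h1 : (gam - 1) / (alpha - β) ≤ x := le_trans (le_max_left _ _) hx
      rw [div_le_iff₀ (by linarith : 0 < alpha - β)] at h1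
      linarith [h1]
    set C : ℝ := gam * x ^ (gam - 1) * Real.exp (-alpha * x) * Real.exp (β * x) with hCdef
    have hpt : ∀ y ∈ Ioi x, Real.exp (-alpha * y) * (gam * y ^ (gam - 1)) ≤
        C * Real.exp (-(β * y)) := by
      intro y hy
      have hyx : x < y := hy
      have hy0 : 0 < y := lt_trans hx0 hyx
      have hdiv : (y / x) ^ (gam - 1) ≤ Real.exp ((alpha - β) * (y - x)) := by
        rw [Real.rpow_def_of_pos (div_pos hy0 hx0)]
        apply Real.exp_le_exp.2
        have hlog : Real.log (y / x) ≤ y / x - 1 :=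
          Real.log_le_sub_one_of_pos (div_pos hy0 hx0)
        have h2 : y / x - 1 = (y - x) / x := by field_simp
        have h3 : Real.log (y / x) * (gam - 1) ≤ ((y - x) / x) * (gam - 1) := by
          apply mul_le_mul_of_nonneg_right _ (by linarith)
          linarith [hlog, h2]
        refine h3.trans ?_
        rw [div_mul_eq_mul_div, div_le_iff₀ hx0]
        nlinarith [sub_nonneg.2 hyx.le]
      have hrp : y ^ (gam - 1) ≤ x ^ (gam - 1) * Real.exp ((alpha - β) * (y - x)) := by
        have heq : y ^ (gam - 1) = (y / x) ^ (gam - 1) * x ^ (gam - 1) := by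
          rw [← Real.mul_rpow (by positivity) hx0.le, div_mul_cancel₀ _ hx0.ne']
        rw [heq]
        calc (y / x) ^ (gam - 1) * x ^ (gam - 1)
            ≤ Real.exp ((alpha - β) * (y - x)) * x ^ (gam - 1) :=
              mul_le_mul_of_nonneg_right hdiv (Real.rpow_nonneg hx0.le _)
          _ = x ^ (gam - 1) * Real.exp ((alpha - β) * (y - x)) := mul_comm _ _
      have hexp : (-alpha * y) + (alpha - β) * (y - x) = (-alpha * x) + (β * x) + (-(β * y)) := by
        ring
      calc Real.exp (-alpha * y) * (gam * y ^ (gam - 1))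
          ≤ Real.exp (-alpha * y) * (gam * (x ^ (gam - 1) * Real.exp ((alpha - β) * (y - x)))) := by
            apply mul_le_mul_of_nonneg_left _ (Real.exp_nonneg _)
            exact mul_le_mul_of_nonneg_left hrp (by linarith)
        _ = gam * x ^ (gam - 1) * Real.exp ((-alpha * y) + (alpha - β) * (y - x)) := by
            rw [Real.exp_add]; ring
        _ = C * Real.exp (-(β * y)) := by
            rw [hexp, Real.exp_add, Real.exp_add, hCdef]; ring
    have hint1 : IntegrableOn (fun y => Real.exp (-alpha * y) * (gam * y ^ (gam - 1))) (Ioi x) :=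
      aux_integrable halpha hgam (by linarith)
    have hint2 : IntegrableOn (fun y => C * Real.exp (-(β * y))) (Ioi x) := by
      have := (exp_neg_integrableOn_Ioi x hβpos).const_mul C
      refine IntegrableOn.congr_fun this (fun y _ => ?_) measurableSet_Ioi
      rw [neg_mul]
    have hJ : (∫ y in Ioi x, Real.exp (-alpha * y) * (gam * y ^ (gam - 1))) ≤
        gam * x ^ (gam - 1) * Real.exp (-alpha * x) / β := by
      have h4 := setIntegral_mono_on hint1 hint2 measurableSet_Ioi hpt
      rw [integral_const_mul, aux_exp_int β x hβpos] at h4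
      have hE : Real.exp (β * x) * Real.exp (-(β * x)) = 1 := by
        rw [← Real.exp_add]; simp
      calc (∫ y in Ioi x, Real.exp (-alpha * y) * (gam * y ^ (gam - 1)))
          ≤ C * (Real.exp (-(β * x)) / β) := h4
        _ = gam * x ^ (gam - 1) * Real.exp (-alpha * x) / β *
              (Real.exp (β * x) * Real.exp (-(β * x))) := by rw [hCdef]; ring
        _ = gam * x ^ (gam - 1) * Real.exp (-alpha * x) / β := by rw [hE, mul_one]
    rw [hs x (by linarith)]
    have hE2 : Real.exp (alpha * x) * Real.exp (-alpha * x) = 1 := by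
      rw [← Real.exp_add]; simp
    have h5 : lam * Real.exp (alpha * x) *
        (∫ y in Ioi x, Real.exp (-alpha * y) * (gam * y ^ (gam - 1))) ≤
        lam * gam * x ^ (gam - 1) / β := by
      calc lam * Real.exp (alpha * x) *
            (∫ y in Ioi x, Real.exp (-alpha * y) * (gam * y ^ (gam - 1)))
          ≤ lam * Real.exp (alpha * x) * (gam * x ^ (gam - 1) * Real.exp (-alpha * x) / β) := by
            exact mul_le_mul_of_nonneg_left hJ
              (le_of_lt (mul_pos hlam (Real.exp_pos _)))
        _ = lam * gam * x ^ (gam - 1) / β * (Real.exp (alpha * x) * Real.exp (-alpha * x)) := by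
            ring
        _ = lam * gam * x ^ (gam - 1) / β := by rw [hE2, mul_one]
    have h6 : gam * δ * x ^ (gam - 1) =
        -a * gam * x ^ (gam - 1) - lam * gam * x ^ (gam - 1) / β := by
      rw [hδdef]; field_simp
    rw [h6]; linarith [h5]
  have htend : Filter.Tendsto (fun x : ℝ => gam * δ * x ^ (gam - 1)) atTop atTop :=
    Filter.Tendsto.const_mul_atTop (by positivity)
      (tendsto_rpow_atTop (by linarith : (0:ℝ) < gam - 1))
  exact tendsto_atTop_mono' atTop (Filter.eventually_atTop.2 ⟨x₀, key⟩) htend
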